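/- No Thomas-Walls graph T_n is properly 3-colorable. More precisely, if T_1 = K_4 is not 3-colorable and T_{n+1} is obtained from T_n by deleting an edge uv and adding vertices x, y, z with edges ux, xy, xz, vy, vz, yz, then in any proper 3-coloring of T_{n+1} the vertices u and v receive the same color whenever x,y,z,u,v induce this gadget with ψ(u) determined; conclude by induction that T_{n+1} is not 3-colorable. -/
import Mathlib


/-- `(V, E)` is a concrete copy of `K₄`: four distinct vertices and all six edges. -/
def IsK4 (V : Finset ℕ) (E : Finset (Sym2 ℕ)) : Prop :=
  ∃ a b c d : ℕ, a ≠ b ∧ a ≠ c ∧ a ≠ d ∧ b ≠ c ∧ b ≠ d ∧ c ≠ d ∧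
    V = {a, b, c, d} ∧
    E = {s(a, b), s(a, c), s(a, d), s(b, c), s(b, d), s(c, d)}

/-- `(V', E')` is obtained from `(V, E)` by the Thomas–Walls step: delete an edge `uv`
lying in two triangles, and add new vertices `x, y, z` and edges
`ux, xy, xz, vy, vz, yz`. -/
def TWStep (V : Finset ℕ) (E : Finset (Sym2 ℕ)) (V' : Finset ℕ) (E' : Finset (Sym2 ℕ)) : Prop :=
  (∀ e ∈ E, ∀ w : ℕ, w ∈ e → w ∈ V) ∧
  ∃ u v x y z : ℕ, u ∈ V ∧ v ∈ V ∧ u ≠ v ∧ s(u, v) ∈ E ∧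
    (∃ p q : ℕ, p ≠ q ∧ s(u, p) ∈ E ∧ s(v, p) ∈ E ∧ s(u, q) ∈ E ∧ s(v, q) ∈ E) ∧
    x ∉ V ∧ y ∉ V ∧ z ∉ V ∧ x ≠ y ∧ x ≠ z ∧ y ≠ z ∧
    V' = V ∪ {x, y, z} ∧
    E' = (E \ {s(u, v)}) ∪ {s(u, x), s(x, y), s(x, z), s(v, y), s(v, z), s(y, z)}

/-- `(V, E)` is (a concrete copy of) the Thomas–Walls graph `Tₙ`. -/
inductive IsThomasWalls : ℕ → Finset ℕ → Finset (Sym2 ℕ) → Prop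
  | base (V : Finset ℕ) (E : Finset (Sym2 ℕ)) : IsK4 V E → IsThomasWalls 1 V E
  | step (n : ℕ) (V E V' E') : IsThomasWalls n V E → TWStep V E V' E' →
      IsThomasWalls (n + 1) V' E'

/-- No Thomas–Walls graph `Tₙ` is properly 3-colorable. -/
theorem thomasWalls_not_3_colorable (n : ℕ) (V : Finset ℕ) (E : Finset (Sym2 ℕ))
    (h : IsThomasWalls n V E) :
    ¬ ∃ c : ℕ → Fin 3, ∀ a b : ℕ, s(a, b) ∈ E → a ≠ b → c a ≠ c b := by
  induction h with
  | base V E hk4 =>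
    rintro ⟨c, hc⟩
    obtain ⟨a, b, d, e, hab, had, hae, hbd, hbe, hde, hV, hE⟩ := hk4
    subst hE
    have h1 : c a ≠ c b := hc a b (by simp) hab
    have h2 : c a ≠ c d := hc a d (by simp) had
    have h3 : c a ≠ c e := hc a e (by simp) hae
    have h4 : c b ≠ c d := hc b d (by simp) hbd
    have h5 : c b ≠ c e := hc b e (by simp) hbe
    have h6 : c d ≠ c e := hc d e (by simp) hde
    have v1 : (c a).val < 3 := (c a).isLt
    have v2 : (c b).val < 3 := (c b).isLt
    have v3 : (c d).val < 3 := (c d).isLt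
    have v4 : (c e).val < 3 := (c e).isLt
    have n1 : (c a).val ≠ (c b).val := fun h => h1 (Fin.ext h)
    have n2 : (c a).val ≠ (c d).val := fun h => h2 (Fin.ext h)
    have n3 : (c a).val ≠ (c e).val := fun h => h3 (Fin.ext h)
    have n4 : (c b).val ≠ (c d).val := fun h => h4 (Fin.ext h)
    have n5 : (c b).val ≠ (c e).val := fun h => h5 (Fin.ext h)
    have n6 : (c d).val ≠ (c e).val := fun h => h6 (Fin.ext h)
    omega
  | step n V E V' E' _ hstep ih =>
    rintro ⟨c, hc⟩
    obtain ⟨hsub, u, v, x, y, z, hu, hv, huv, huvE, _, hx, hy, hz, hxy, hxz, hyz, hV', hE'⟩ :=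
      hstep
    subst hE'
    -- the gadget forces c u ≠ c v
    have hux : u ≠ x := fun h => hx (h ▸ hu)
    have hvy : v ≠ y := fun h => hy (h ▸ hv)
    have hvz : v ≠ z := fun h => hz (h ▸ hv)
    have g1 : c u ≠ c x := hc u x (by simp) hux
    have g2 : c x ≠ c y := hc x y (by simp) hxy
    have g3 : c x ≠ c z := hc x z (by simp) hxz
    have g4 : c v ≠ c y := hc v y (by simp) hvy
    have g5 : c v ≠ c z := hc v z (by simp) hvz
    have g6 : c y ≠ c z := hc y z (by simp) hyz
    have hcuv : c u ≠ c v := by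
      have v1 : (c u).val < 3 := (c u).isLt
      have v2 : (c v).val < 3 := (c v).isLt
      have v3 : (c x).val < 3 := (c x).isLt
      have v4 : (c y).val < 3 := (c y).isLt
      have v5 : (c z).val < 3 := (c z).isLt
      have n1 : (c u).val ≠ (c x).val := fun h => g1 (Fin.ext h)
      have n2 : (c x).val ≠ (c y).val := fun h => g2 (Fin.ext h)
      have n3 : (c x).val ≠ (c z).val := fun h => g3 (Fin.ext h)
      have n4 : (c v).val ≠ (c y).val := fun h => g4 (Fin.ext h)
      have n5 : (c v).val ≠ (c z).val := fun h => g5 (Fin.ext h)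
      have n6 : (c y).val ≠ (c z).val := fun h => g6 (Fin.ext h)
      intro h
      exact absurd (congrArg Fin.val h) (by omega)
    -- so c is a proper coloring of E, contradicting the IH
    apply ih
    refine ⟨c, fun a b hab hne => ?_⟩
    by_cases he : s(a, b) = s(u, v)
    · rcases Sym2.eq_iff.mp he with ⟨rfl, rfl⟩ | ⟨rfl, rfl⟩
      · exact hcuv
      · exact hcuv.symm
    · exact hc a b (by simp [Finset.mem_union, Finset.mem_sdiff, hab, he]) hne
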